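/- The knowledge modality is not definable through comprehension: there exist two epistemic models with meanings and pointed state-meaning pairs that agree on all formulas of the C-fragment (built from propositional variables, ¬, →, C_a), yet one satisfies K_a p and the other does not. Consequently, no formula of the C-fragment is semantically equivalent to K_a p. -/

import Mathlib

/-- An epistemic model with meanings. -/
structure EMM (Agent Var : Type) where
  W : Type
  rel : Agent → W → W → Prop
  equiv : ∀ a, Equivalence (rel a)
  M : W → Type
  nonempty : ∀ w, Nonempty (M w)
  val : (w : W) → Var → Set (M w)

/-- Formulas of the bimodal language. -/
inductive Form (Agent Var : Type) : Type where
  | var : Var → Form Agent Var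
  | neg : Form Agent Var → Form Agent Var
  | imp : Form Agent Var → Form Agent Var → Form Agent Var
  | K : Agent → Form Agent Var → Form Agent Var
  | C : Agent → Form Agent Var → Form Agent Var

variable {Agent Var : Type}

/-- Satisfaction relation. -/
def Sat (Mo : EMM Agent Var) : Form Agent Var → (w : Mo.W) → Mo.M w → Prop
  | .var p, w, m => m ∈ Mo.val w p
  | .neg φ, w, m => ¬ Sat Mo φ w m
  | .imp φ ψ, w, m => Sat Mo φ w m → Sat Mo ψ w m
  | .K a φ, w, _ => ∀ u, Mo.rel a w u → ∀ m' : Mo.M u, Sat Mo φ u m'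
  | .C a φ, w, _ => ∀ u, Mo.rel a w u → ∀ m' m'' : Mo.M u, Sat Mo φ u m' → Sat Mo φ u m''

/-- Membership in the C-fragment: no occurrence of the K modality. -/
def noK : Form Agent Var → Prop
  | .var _ => True
  | .neg φ => noK φ
  | .imp φ ψ => noK φ ∧ noK ψ
  | .K _ _ => False
  | .C _ φ => noK φ


def ML : EMM Unit Unit where
  W := Unit
  rel := fun _ _ _ => True
  equiv := fun _ => ⟨fun _ => trivial, fun _ => trivial, fun _ _ => trivial⟩
  M := fun _ => Unit
  nonempty := fun _ => ⟨()⟩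
  val := fun _ _ => Set.univ

def MR : EMM Unit Unit where
  W := Bool
  rel := fun _ _ _ => True
  equiv := fun _ => ⟨fun _ => trivial, fun _ => trivial, fun _ _ => trivial⟩
  M := fun _ => Unit
  nonempty := fun _ => ⟨()⟩
  val := fun w _ => if w then Set.univ else ∅

lemma agree : ∀ φ : Form Unit Unit, noK φ →
    (Sat ML φ () () ↔ Sat MR φ true ()) := by
  intro φ h
  induction φ with
  | var p => simp [Sat, ML, MR]; exact ⟨fun _ => trivial, fun _ => trivial⟩
  | neg φ ih => simp only [Sat]; rw [ih h]
  | imp φ ψ ih1 ih2 => simp only [Sat]; rw [ih1 h.1, ih2 h.2]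
  | K a φ ih => exact absurd h (by simp [noK])
  | C a φ ih =>
    constructor
    · intro _ u _ m' m'' hs
      cases m'; cases m''; exact hs
    · intro _ u _ m' m'' hs
      cases m'; cases m''; exact hs

lemma satL : Sat ML (.K () (.var ())) () () := by
  intro u _ m'; simp [Sat, ML]; trivial

lemma notSatR : ¬ Sat MR (.K () (.var ())) true () := by
  intro h
  have := h false trivial ()
  simp [Sat, MR] at this; exact this

theorem stmt15 :
    (∃ (Mo Mo' : EMM Unit Unit) (w : Mo.W) (m : Mo.M w) (w' : Mo'.W) (m' : Mo'.M w'),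
      (∀ φ : Form Unit Unit, noK φ → (Sat Mo φ w m ↔ Sat Mo' φ w' m')) ∧
      Sat Mo (.K () (.var ())) w m ∧ ¬ Sat Mo' (.K () (.var ())) w' m') ∧
    (∀ ψ : Form Unit Unit, noK ψ →
      ¬ ∀ (Mo : EMM Unit Unit) (w : Mo.W) (m : Mo.M w),
          (Sat Mo ψ w m ↔ Sat Mo (.K () (.var ())) w m)) := by
  constructor
  · exact ⟨ML, MR, (), (), true, (), agree, satL, notSatR⟩
  · intro ψ hψ hall
    have h1 : Sat ML ψ () () := (hall ML () ()).mpr satL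
    have h2 : Sat MR ψ true () := (agree ψ hψ).mp h1
    exact notSatR ((hall MR true ()).mp h2)
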